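/- (Convergence under disagreement-scaled temperature.) Fix κ > 0 and α_min > 0, and let Q* : S × A → ℝ be a fixed point of the Bellman optimality operator, T Q* = Q*. Let Q_{t+1}^{(i)} = T_{α_t} Q_t^{(i)} for i ∈ {1,2} be coupled iterates driven by the shared disagreement-scaled temperature α_t(s) = max{α_min, (max_{a∈A} |Q_t^{(1)}(s,a) − Q_t^{(2)}(s,a)|)/κ}, and let Δ_0 = ‖Q_0^{(1)} − Q_0^{(2)}‖∞. Then for each i ∈ {1,2} and all t ≥ 0, ‖Q_t^{(i)} − Q*‖∞ ≤ γ^t · ‖Q_0^{(i)} − Q*‖∞ + (γ·α_min·log|A|/(1−γ)) · (1 − γ^t) + (Δ_0·log|A|/κ) · t · γ^t. -/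

import Mathlib

open Finset Real

/-- The soft Bellman operator at temperature function `α`:
`(T_α Q)(s,a) = r(s,a) + γ·∑_{s'} P(s'|s,a)·α(s')·log(∑_{a'} exp(Q(s',a')/α(s')))`. -/
noncomputable def softBellman {S A : Type*} [Fintype S] [Fintype A]
    (r : S → A → ℝ) (γ : ℝ) (P : S → A → S → ℝ) (α : S → ℝ)
    (Q : S → A → ℝ) (s : S) (a : A) : ℝ :=
  r s a + γ * ∑ s', P s a s' * (α s' * Real.log (∑ a', Real.exp (Q s' a' / α s')))

/-- The Bellman optimality operator:
`(T Q)(s,a) = r(s,a) + γ·∑_{s'} P(s'|s,a)·max_{a'} Q(s',a')`. -/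
noncomputable def hardBellman {S A : Type*} [Fintype S] [Fintype A] [Nonempty A]
    (r : S → A → ℝ) (γ : ℝ) (P : S → A → S → ℝ)
    (Q : S → A → ℝ) (s : S) (a : A) : ℝ :=
  r s a + γ * ∑ s', P s a s' * Finset.univ.sup' Finset.univ_nonempty (Q s')

/-- Sup norm on `S × A → ℝ`: `‖F‖∞ = max_{(s,a)} |F(s,a)|`. -/
noncomputable def supNorm {S A : Type*} [Fintype S] [Fintype A] [Nonempty S] [Nonempty A]
    (Q : S → A → ℝ) : ℝ :=
  Finset.univ.sup' Finset.univ_nonempty (fun p : S × A => |Q p.1 p.2|)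

section Aux
variable {S A : Type*} [Fintype S] [Fintype A] [Nonempty S] [Nonempty A]

lemma lse_ge {α : ℝ} (hα : 0 < α) (Q : A → ℝ) :
    Finset.univ.sup' Finset.univ_nonempty Q ≤ α * Real.log (∑ a, Real.exp (Q a / α)) := by
  obtain ⟨a0, -, ha0⟩ := Finset.exists_mem_eq_sup' Finset.univ_nonempty Q
  have h1 : Real.exp (Q a0 / α) ≤ ∑ a, Real.exp (Q a / α) :=
    Finset.single_le_sum (f := fun a => Real.exp (Q a / α)) (fun a _ => (Real.exp_pos _).le) (Finset.mem_univ a0)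
  have h2 := Real.log_le_log (Real.exp_pos _) h1
  rw [Real.log_exp] at h2
  rw [ha0]
  calc Q a0 = α * (Q a0 / α) := by field_simp
    _ ≤ α * Real.log (∑ a, Real.exp (Q a / α)) := by
        exact mul_le_mul_of_nonneg_left h2 hα.le

lemma lse_le {α : ℝ} (hα : 0 < α) (Q : A → ℝ) :
    α * Real.log (∑ a, Real.exp (Q a / α)) ≤
      Finset.univ.sup' Finset.univ_nonempty Q + α * Real.log (Fintype.card A) := by
  set M := Finset.univ.sup' Finset.univ_nonempty Q with hM
  have hsum : ∑ a, Real.exp (Q a / α) ≤ (Fintype.card A : ℝ) * Real.exp (M / α) := by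
    calc ∑ a, Real.exp (Q a / α) ≤ ∑ _a : A, Real.exp (M / α) := by
          apply Finset.sum_le_sum
          intro a _
          apply Real.exp_le_exp.mpr
          gcongr
          exact Finset.le_sup' Q (Finset.mem_univ a)
      _ = (Fintype.card A : ℝ) * Real.exp (M / α) := by
          rw [Finset.sum_const, Finset.card_univ, nsmul_eq_mul]
  have hpos : (0:ℝ) < ∑ a, Real.exp (Q a / α) :=
    Finset.sum_pos (fun a _ => Real.exp_pos _) Finset.univ_nonempty
  have h2 := Real.log_le_log hpos hsum
  rw [Real.log_mul (by positivity) (Real.exp_pos _).ne', Real.log_exp] at h2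
  have := mul_le_mul_of_nonneg_left h2 hα.le
  calc α * Real.log (∑ a, Real.exp (Q a / α)) ≤ α * (Real.log (Fintype.card A) + M / α) := this
    _ = M + α * Real.log (Fintype.card A) := by field_simp; ring

lemma lse_lip {α : ℝ} (hα : 0 < α) (Q Q' : A → ℝ) (M : ℝ)
    (h : ∀ a, Q a ≤ Q' a + M) :
    α * Real.log (∑ a, Real.exp (Q a / α)) ≤ α * Real.log (∑ a, Real.exp (Q' a / α)) + M := by
  have hsum : ∑ a, Real.exp (Q a / α) ≤ (∑ a, Real.exp (Q' a / α)) * Real.exp (M / α) := by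
    rw [Finset.sum_mul]
    apply Finset.sum_le_sum
    intro a _
    rw [← Real.exp_add]
    apply Real.exp_le_exp.mpr
    rw [← add_div]
    gcongr
    exact h a
  have hpos : (0:ℝ) < ∑ a, Real.exp (Q a / α) :=
    Finset.sum_pos (fun a _ => Real.exp_pos _) Finset.univ_nonempty
  have hpos' : (0:ℝ) < ∑ a, Real.exp (Q' a / α) :=
    Finset.sum_pos (fun a _ => Real.exp_pos _) Finset.univ_nonempty
  have h2 := Real.log_le_log hpos hsum
  rw [Real.log_mul hpos'.ne' (Real.exp_pos _).ne', Real.log_exp] at h2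
  have := mul_le_mul_of_nonneg_left h2 hα.le
  calc α * Real.log (∑ a, Real.exp (Q a / α))
      ≤ α * (Real.log (∑ a, Real.exp (Q' a / α)) + M / α) := this
    _ = α * Real.log (∑ a, Real.exp (Q' a / α)) + M := by field_simp

lemma sup'_lip (Q Q' : A → ℝ) (M : ℝ) (h : ∀ a, Q a ≤ Q' a + M) :
    Finset.univ.sup' Finset.univ_nonempty Q ≤ Finset.univ.sup' Finset.univ_nonempty Q' + M := by
  apply Finset.sup'_le
  intro a _
  exact (h a).trans (by gcongr; exact Finset.le_sup' Q' (Finset.mem_univ a))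

lemma wsum_bound (P : S → ℝ) (hP : ∀ s, 0 ≤ P s) (hP1 : ∑ s, P s = 1)
    (f g : S → ℝ) (C : ℝ) (h : ∀ s, |f s - g s| ≤ C) :
    |∑ s, P s * f s - ∑ s, P s * g s| ≤ C := by
  rw [← Finset.sum_sub_distrib]
  calc |∑ s, (P s * f s - P s * g s)| ≤ ∑ s, |P s * f s - P s * g s| :=
        Finset.abs_sum_le_sum_abs _ _
    _ = ∑ s, P s * |f s - g s| := by
        apply Finset.sum_congr rfl; intro s _
        rw [← mul_sub, abs_mul, abs_of_nonneg (hP s)]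
    _ ≤ ∑ s, P s * C := by
        apply Finset.sum_le_sum; intro s _
        exact mul_le_mul_of_nonneg_left (h s) (hP s)
    _ = C := by rw [← Finset.sum_mul, hP1, one_mul]

lemma supNorm_le (Q : S → A → ℝ) (c : ℝ) (h : ∀ s a, |Q s a| ≤ c) : supNorm Q ≤ c :=
  Finset.sup'_le _ _ (fun p _ => h p.1 p.2)

lemma le_supNorm (Q : S → A → ℝ) (s : S) (a : A) : |Q s a| ≤ supNorm Q :=
  Finset.le_sup' (fun p : S × A => |Q p.1 p.2|) (Finset.mem_univ (s, a))

lemma supNorm_nonneg (Q : S → A → ℝ) : 0 ≤ supNorm Q :=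
  (abs_nonneg _).trans (le_supNorm Q (Classical.arbitrary S) (Classical.arbitrary A))

end Aux

section Step
set_option linter.unusedSectionVars false
variable {S A : Type*} [Fintype S] [Fintype A] [Nonempty S] [Nonempty A]

lemma soft_hard_step (r : S → A → ℝ) (γ : ℝ) (hγ0 : 0 < γ)
    (P : S → A → S → ℝ) (hP : ∀ s a s', 0 ≤ P s a s') (hP1 : ∀ s a, ∑ s', P s a s' = 1)
    (α : S → ℝ) (hα : ∀ s, 0 < α s) (B : ℝ) (hB : ∀ s, α s ≤ B) (hB0 : 0 ≤ B)
    (Qstar : S → A → ℝ) (hQstar : hardBellman r γ P Qstar = Qstar)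
    (Q : S → A → ℝ) :
    supNorm (fun s a => softBellman r γ P α Q s a - Qstar s a) ≤
      γ * (supNorm (fun s a => Q s a - Qstar s a) + B * Real.log (Fintype.card A)) := by
  set e := supNorm (fun s a => Q s a - Qstar s a) with he
  have hL : 0 ≤ Real.log (Fintype.card A) := by
    apply Real.log_nonneg
    exact_mod_cast Fintype.card_pos
  apply supNorm_le
  intro s a
  have hQs : Qstar s a = hardBellman r γ P Qstar s a := by rw [hQstar]
  rw [hQs]
  simp only [softBellman, hardBellman]
  have key : ∀ s' : S, |α s' * Real.log (∑ a', Real.exp (Q s' a' / α s')) -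
      Finset.univ.sup' Finset.univ_nonempty (Qstar s')| ≤ e + B * Real.log (Fintype.card A) := by
    intro s'
    have habs : ∀ a', |Q s' a' - Qstar s' a'| ≤ e :=
      fun a' => le_supNorm (fun s a => Q s a - Qstar s a) s' a'
    rw [abs_sub_le_iff]
    constructor
    · have h1 := lse_le (hα s') (Q s')
      have h2 : Finset.univ.sup' Finset.univ_nonempty (Q s') ≤
          Finset.univ.sup' Finset.univ_nonempty (Qstar s') + e := by
        apply sup'_lip
        intro a'
        have := (abs_le.mp (habs a')).2
        linarith
      have h3 : α s' * Real.log (Fintype.card A) ≤ B * Real.log (Fintype.card A) :=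
        mul_le_mul_of_nonneg_right (hB s') hL
      linarith
    · have h1 := lse_ge (hα s') (Q s')
      have h2 : Finset.univ.sup' Finset.univ_nonempty (Qstar s') ≤
          Finset.univ.sup' Finset.univ_nonempty (Q s') + e := by
        apply sup'_lip
        intro a'
        have := (abs_le.mp (habs a')).1
        linarith
      nlinarith [mul_nonneg hB0 hL]
  have := wsum_bound (P s a) (hP s a) (hP1 s a)
    (fun s' => α s' * Real.log (∑ a', Real.exp (Q s' a' / α s')))
    (fun s' => Finset.univ.sup' Finset.univ_nonempty (Qstar s'))
    (e + B * Real.log (Fintype.card A)) key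
  have heq : r s a + γ * ∑ s', P s a s' * (α s' * Real.log (∑ a', Real.exp (Q s' a' / α s'))) -
        (r s a + γ * ∑ s', P s a s' * Finset.univ.sup' Finset.univ_nonempty (Qstar s'))
      = γ * ((∑ s', P s a s' * (α s' * Real.log (∑ a', Real.exp (Q s' a' / α s')))) -
        ∑ s', P s a s' * Finset.univ.sup' Finset.univ_nonempty (Qstar s')) := by ring
  rw [heq, abs_mul, abs_of_pos hγ0]
  exact mul_le_mul_of_nonneg_left this hγ0.le

lemma soft_contraction (r : S → A → ℝ) (γ : ℝ) (hγ0 : 0 < γ)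
    (P : S → A → S → ℝ) (hP : ∀ s a s', 0 ≤ P s a s') (hP1 : ∀ s a, ∑ s', P s a s' = 1)
    (α : S → ℝ) (hα : ∀ s, 0 < α s) (Q Q' : S → A → ℝ) :
    supNorm (fun s a => softBellman r γ P α Q s a - softBellman r γ P α Q' s a) ≤
      γ * supNorm (fun s a => Q s a - Q' s a) := by
  set D := supNorm (fun s a => Q s a - Q' s a) with hD
  apply supNorm_le
  intro s a
  simp only [softBellman]
  have key : ∀ s' : S, |α s' * Real.log (∑ a', Real.exp (Q s' a' / α s')) -
      α s' * Real.log (∑ a', Real.exp (Q' s' a' / α s'))| ≤ D := by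
    intro s'
    have habs : ∀ a', |Q s' a' - Q' s' a'| ≤ D :=
      fun a' => le_supNorm (fun s a => Q s a - Q' s a) s' a'
    rw [abs_sub_le_iff]
    constructor
    · have := lse_lip (hα s') (Q s') (Q' s') D
        (fun a' => by have := (abs_le.mp (habs a')).2; linarith)
      linarith
    · have := lse_lip (hα s') (Q' s') (Q s') D
        (fun a' => by have := (abs_le.mp (habs a')).1; linarith)
      linarith
  have := wsum_bound (P s a) (hP s a) (hP1 s a)
    (fun s' => α s' * Real.log (∑ a', Real.exp (Q s' a' / α s')))
    (fun s' => α s' * Real.log (∑ a', Real.exp (Q' s' a' / α s'))) D key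
  have heq : r s a + γ * ∑ s', P s a s' * (α s' * Real.log (∑ a', Real.exp (Q s' a' / α s'))) -
        (r s a + γ * ∑ s', P s a s' * (α s' * Real.log (∑ a', Real.exp (Q' s' a' / α s'))))
      = γ * ((∑ s', P s a s' * (α s' * Real.log (∑ a', Real.exp (Q s' a' / α s')))) -
        ∑ s', P s a s' * (α s' * Real.log (∑ a', Real.exp (Q' s' a' / α s')))) := by ring
  rw [heq, abs_mul, abs_of_pos hγ0]
  exact mul_le_mul_of_nonneg_left this hγ0.le

end Step

/-- Convergence under disagreement-scaled temperature: for coupled iterates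
`Q_{t+1}⁽ⁱ⁾ = T_{α_t} Q_t⁽ⁱ⁾` with
`α_t(s) = max{α_min, (max_a |Q_t¹(s,a) − Q_t²(s,a)|)/κ}` and
`Δ_0 = ‖Q_0¹ − Q_0²‖∞`, one has
`‖Q_t⁽ⁱ⁾ − Q*‖∞ ≤ γ^t·‖Q_0⁽ⁱ⁾ − Q*‖∞ + (γ·α_min·log|A|/(1−γ))·(1 − γ^t)
  + (Δ_0·log|A|/κ)·t·γ^t`. -/
theorem convergence_disagreement_temperature {S A : Type*}
    [Fintype S] [Fintype A] [Nonempty S] [Nonempty A]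
    (r : S → A → ℝ) (γ : ℝ) (hγ0 : 0 < γ) (hγ1 : γ < 1)
    (P : S → A → S → ℝ) (hP : ∀ s a s', 0 ≤ P s a s')
    (hP1 : ∀ s a, ∑ s', P s a s' = 1)
    (κ αmin : ℝ) (hκ : 0 < κ) (hαmin : 0 < αmin)
    (Qstar : S → A → ℝ) (hQstar : hardBellman r γ P Qstar = Qstar)
    (Q1 Q2 : ℕ → S → A → ℝ)
    (αseq : ℕ → S → ℝ)
    (hαseq : ∀ t s, αseq t s =
      max αmin ((Finset.univ.sup' Finset.univ_nonempty fun a => |Q1 t s a - Q2 t s a|) / κ))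
    (hQ1 : ∀ t, Q1 (t + 1) = softBellman r γ P (αseq t) (Q1 t))
    (hQ2 : ∀ t, Q2 (t + 1) = softBellman r γ P (αseq t) (Q2 t)) :
    ∀ (Qi : ℕ → S → A → ℝ), (Qi = Q1 ∨ Qi = Q2) → ∀ t,
      supNorm (fun s a => Qi t s a - Qstar s a) ≤
        γ ^ t * supNorm (fun s a => Qi 0 s a - Qstar s a) +
          (γ * αmin * Real.log (Fintype.card A) / (1 - γ)) * (1 - γ ^ t) +
          (supNorm (fun s a => Q1 0 s a - Q2 0 s a) * Real.log (Fintype.card A) / κ) *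
            t * γ ^ t := by
  intro Qi hQi
  have hL : 0 ≤ Real.log (Fintype.card A) := by
    apply Real.log_nonneg
    exact_mod_cast Fintype.card_pos
  set L := Real.log (Fintype.card A) with hLdef
  have hαpos : ∀ t s, 0 < αseq t s := fun t s => by
    rw [hαseq]; exact lt_of_lt_of_le hαmin (le_max_left _ _)
  have hΔ0 : ∀ t, 0 ≤ supNorm (fun s a => Q1 t s a - Q2 t s a) :=
    fun t => supNorm_nonneg _
  have hαB : ∀ t s, αseq t s ≤ αmin + supNorm (fun s a => Q1 t s a - Q2 t s a) / κ := by
    intro t s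
    rw [hαseq]
    apply max_le
    · have : 0 ≤ supNorm (fun s a => Q1 t s a - Q2 t s a) / κ := div_nonneg (hΔ0 t) hκ.le
      linarith
    · have h1 : (Finset.univ.sup' Finset.univ_nonempty fun a => |Q1 t s a - Q2 t s a|) ≤
          supNorm (fun s a => Q1 t s a - Q2 t s a) := by
        apply Finset.sup'_le
        intro a _
        exact le_supNorm (fun s a => Q1 t s a - Q2 t s a) s a
      have h2 : (Finset.univ.sup' Finset.univ_nonempty fun a => |Q1 t s a - Q2 t s a|) / κ ≤
          supNorm (fun s a => Q1 t s a - Q2 t s a) / κ := by gcongr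
      linarith
  have hΔrec : ∀ t, supNorm (fun s a => Q1 (t+1) s a - Q2 (t+1) s a) ≤
      γ * supNorm (fun s a => Q1 t s a - Q2 t s a) := by
    intro t
    rw [hQ1 t, hQ2 t]
    exact soft_contraction r γ hγ0 P hP hP1 (αseq t) (hαpos t) (Q1 t) (Q2 t)
  have hΔbound : ∀ t, supNorm (fun s a => Q1 t s a - Q2 t s a) ≤
      γ ^ t * supNorm (fun s a => Q1 0 s a - Q2 0 s a) := by
    intro t
    induction t with
    | zero => simp
    | succ n ih =>
      calc supNorm (fun s a => Q1 (n+1) s a - Q2 (n+1) s a)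
          ≤ γ * supNorm (fun s a => Q1 n s a - Q2 n s a) := hΔrec n
        _ ≤ γ * (γ ^ n * supNorm (fun s a => Q1 0 s a - Q2 0 s a)) := by
            exact mul_le_mul_of_nonneg_left ih hγ0.le
        _ = γ ^ (n+1) * supNorm (fun s a => Q1 0 s a - Q2 0 s a) := by ring
  have hQirec : ∀ t, Qi (t+1) = softBellman r γ P (αseq t) (Qi t) := by
    rcases hQi with h | h <;> subst h
    · exact hQ1
    · exact hQ2
  have herec : ∀ t, supNorm (fun s a => Qi (t+1) s a - Qstar s a) ≤
      γ * supNorm (fun s a => Qi t s a - Qstar s a) + γ * αmin * L +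
        γ ^ (t+1) * (supNorm (fun s a => Q1 0 s a - Q2 0 s a) * L / κ) := by
    intro t
    have hBnn : 0 ≤ αmin + supNorm (fun s a => Q1 t s a - Q2 t s a) / κ := by
      have : 0 ≤ supNorm (fun s a => Q1 t s a - Q2 t s a) / κ := div_nonneg (hΔ0 t) hκ.le
      linarith
    have hstep := soft_hard_step r γ hγ0 P hP hP1 (αseq t) (hαpos t)
      (αmin + supNorm (fun s a => Q1 t s a - Q2 t s a) / κ) (hαB t) hBnn
      Qstar hQstar (Qi t)
    rw [← hQirec t] at hstep
    have hΔb := hΔbound t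
    have hdiv : supNorm (fun s a => Q1 t s a - Q2 t s a) / κ ≤
        γ ^ t * supNorm (fun s a => Q1 0 s a - Q2 0 s a) / κ := by gcongr
    have hmul : supNorm (fun s a => Q1 t s a - Q2 t s a) / κ * L ≤
        γ ^ t * supNorm (fun s a => Q1 0 s a - Q2 0 s a) / κ * L :=
      mul_le_mul_of_nonneg_right hdiv hL
    calc supNorm (fun s a => Qi (t+1) s a - Qstar s a)
        ≤ γ * (supNorm (fun s a => Qi t s a - Qstar s a) +
            (αmin + supNorm (fun s a => Q1 t s a - Q2 t s a) / κ) * L) := hstep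
      _ = γ * supNorm (fun s a => Qi t s a - Qstar s a) + γ * αmin * L +
            γ * (supNorm (fun s a => Q1 t s a - Q2 t s a) / κ * L) := by ring
      _ ≤ γ * supNorm (fun s a => Qi t s a - Qstar s a) + γ * αmin * L +
            γ * (γ ^ t * supNorm (fun s a => Q1 0 s a - Q2 0 s a) / κ * L) := by
          have := mul_le_mul_of_nonneg_left hmul hγ0.le
          linarith
      _ = γ * supNorm (fun s a => Qi t s a - Qstar s a) + γ * αmin * L +
            γ ^ (t+1) * (supNorm (fun s a => Q1 0 s a - Q2 0 s a) * L / κ) := by ring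
  have hγne : 1 - γ ≠ 0 := by linarith
  have hc : γ * αmin * L / (1 - γ) * (1 - γ) = γ * αmin * L := by field_simp
  intro t
  induction t with
  | zero => simp
  | succ n ih =>
    have key : γ * αmin * L / (1 - γ) * (γ * (1 - γ ^ n)) + γ * αmin * L =
        γ * αmin * L / (1 - γ) * (1 - γ ^ (n+1)) := by
      field_simp
      ring
    calc supNorm (fun s a => Qi (n+1) s a - Qstar s a)
        ≤ γ * supNorm (fun s a => Qi n s a - Qstar s a) + γ * αmin * L +
            γ ^ (n+1) * (supNorm (fun s a => Q1 0 s a - Q2 0 s a) * L / κ) := herec n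
      _ ≤ γ * (γ ^ n * supNorm (fun s a => Qi 0 s a - Qstar s a) +
            (γ * αmin * L / (1 - γ)) * (1 - γ ^ n) +
            (supNorm (fun s a => Q1 0 s a - Q2 0 s a) * L / κ) * n * γ ^ n) +
            γ * αmin * L +
            γ ^ (n+1) * (supNorm (fun s a => Q1 0 s a - Q2 0 s a) * L / κ) := by
          have := mul_le_mul_of_nonneg_left ih hγ0.le
          linarith
      _ = γ ^ (n+1) * supNorm (fun s a => Qi 0 s a - Qstar s a) +
            (γ * αmin * L / (1 - γ) * (γ * (1 - γ ^ n)) + γ * αmin * L) +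
            (supNorm (fun s a => Q1 0 s a - Q2 0 s a) * L / κ) * (n+1 : ℕ) * γ ^ (n+1) := by
          push_cast; ring
      _ = γ ^ (n+1) * supNorm (fun s a => Qi 0 s a - Qstar s a) +
            (γ * αmin * L / (1 - γ)) * (1 - γ ^ (n+1)) +
            (supNorm (fun s a => Q1 0 s a - Q2 0 s a) * L / κ) * (n+1 : ℕ) * γ ^ (n+1) := by
          rw [key]
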